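/- The group generated by G(x,y) = (y, (1−x)/(1−xy)) and the reflection R(x,y) = (y,x), acting as birational transformations of the plane, is a dihedral group of order 10; in particular R∘G∘R = G^{-1} and G has order 5 while R has order 2. -/

import Mathlib

/-- The Gauss recurrence `G(x,y) = (y, (1−x)/(1−xy))` and the reflection `R(x,y) = (y,x)`
generate a dihedral group of order 10 of birational transformations: `R` has order 2,
`G` has order 5 (it is not the identity but `G⁵ = id` wherever defined), and
`R ∘ G ∘ R = G⁻¹`, i.e. `G ∘ (R ∘ G ∘ R) = id` wherever defined. -/
theorem gauss_group_dihedral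
    (G R : ℝ × ℝ → ℝ × ℝ)
    (hG : ∀ p : ℝ × ℝ, G p = (p.2, (1 - p.1) / (1 - p.1 * p.2)))
    (hR : ∀ p : ℝ × ℝ, R p = (p.2, p.1)) :
    -- R has order 2
    (∀ p : ℝ × ℝ, R (R p) = p) ∧ R ≠ id ∧
    -- G has order 5 wherever defined, and G is not the identity
    (∀ p : ℝ × ℝ, (∀ i < 5, (G^[i] p).1 * (G^[i] p).2 ≠ 1) → G^[5] p = p) ∧ G ≠ id ∧
    -- R ∘ G ∘ R = G⁻¹ : composing with G gives the identity wherever defined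
    (∀ p : ℝ × ℝ, p.1 * p.2 ≠ 1 → (R (G (R p))).1 * (R (G (R p))).2 ≠ 1 →
      G (R (G (R p))) = p) := by
  refine ⟨?_, ?_, ?_, ?_, ?_⟩
  · intro p
    rw [hR, hR]
  · intro h
    have := congrArg Prod.fst (congrFun h ((0 : ℝ), (1 : ℝ)))
    rw [hR] at this
    simp at this
  · rintro ⟨x, y⟩ h
    have h0 : x * y ≠ 1 := by simpa using h 0 (by norm_num)
    have hxy : 1 - x * y ≠ 0 := by
      intro hc; exact h0 (by linarith)
    have e1 : G^[1] (x, y) = (y, (1 - x) / (1 - x * y)) := by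
      simp [hG]
    have h1 : y * ((1 - x) / (1 - x * y)) ≠ 1 := by
      have := h 1 (by norm_num)
      rw [e1] at this; simpa using this
    have hy1 : y ≠ 1 := by
      intro hc
      apply h1
      have hx : (1:ℝ) - x ≠ 0 := by simpa [hc] using hxy
      rw [hc]
      field_simp
    have e2 : G^[2] (x, y) = ((1 - x) / (1 - x * y), 1 - x * y) := by
      rw [show (2 : ℕ) = 1 + 1 from rfl, Function.iterate_succ_apply', e1, hG]
      simp only
      congr 1
      rw [div_eq_iff (by intro hc; apply h1; rw [sub_eq_zero] at hc; linarith)]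
      rw [mul_sub, mul_one, mul_left_comm, mul_div_cancel₀ _ hxy]
      ring
    have h2 : ((1 - x) / (1 - x * y)) * (1 - x * y) ≠ 1 := by
      have := h 2 (by norm_num)
      rw [e2] at this; simpa using this
    have hx0 : x ≠ 0 := by
      intro hc
      apply h2
      rw [hc]
      field_simp
      norm_num
    have e3 : G^[3] (x, y) = (1 - x * y, (1 - y) / (1 - x * y)) := by
      rw [show (3 : ℕ) = 2 + 1 from rfl, Function.iterate_succ_apply', e2, hG]
      simp only
      congr 1
      rw [div_eq_div_iff (by intro hc; apply h2; rw [sub_eq_zero] at hc; linarith) hxy]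
      field_simp
      ring
    have h3 : (1 - x * y) * ((1 - y) / (1 - x * y)) ≠ 1 := by
      have := h 3 (by norm_num)
      rw [e3] at this; simpa using this
    have hy0 : y ≠ 0 := by
      intro hc
      apply h3
      rw [hc]
      field_simp
      norm_num
    have e4 : G^[4] (x, y) = ((1 - y) / (1 - x * y), x) := by
      rw [show (4 : ℕ) = 3 + 1 from rfl, Function.iterate_succ_apply', e3, hG]
      simp only
      congr 1
      rw [div_eq_iff (by intro hc; rw [sub_eq_zero] at hc; exact h3 hc.symm)]
      field_simp
      ring
    have h4 : ((1 - y) / (1 - x * y)) * x ≠ 1 := by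
      have := h 4 (by norm_num)
      rw [e4] at this; simpa using this
    have hx1 : x ≠ 1 := by
      intro hc
      apply h4
      have hy' : (1:ℝ) - y ≠ 0 := by simpa [hc] using hxy
      rw [hc]
      field_simp
    rw [show (5 : ℕ) = 4 + 1 from rfl, Function.iterate_succ_apply', e4, hG]
    simp only
    have hden : 1 - (1 - y) / (1 - x * y) * x ≠ 0 := by
      intro hc; apply h4; rw [sub_eq_zero] at hc; linarith
    refine Prod.ext rfl ?_
    simp only
    rw [div_eq_iff hden]
    field_simp [show (1:ℝ) - y * x ≠ 0 by rwa [mul_comm] at hxy]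
    ring
  · intro h
    have := congrArg Prod.snd (congrFun h ((0 : ℝ), (0 : ℝ)))
    rw [hG] at this
    simp at this
  · rintro ⟨x, y⟩ h0 h1
    simp only [hR, hG] at h1 ⊢
    simp only at h0 h1 ⊢
    have hxy : 1 - y * x ≠ 0 := by
      intro hc; apply h0; nlinarith
    have hden : 1 - (1 - y) / (1 - y * x) * x ≠ 0 := by
      intro hc; apply h1; rw [sub_eq_zero] at hc; linarith
    refine Prod.ext rfl ?_
    simp only
    rw [div_eq_iff hden]
    field_simp
    ring
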